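/- Let V be a real vector space and P : V^k → ℝ a symmetric k-multilinear map. For elements X, A, B, C in V and real t, the function f(t) = P(X, Y(t), ..., Y(t)) with Y(t) = (1-t)A - (1/2)t(1-t)B + tC (the last k-1 arguments all equal to Y(t)) satisfies: ∫₀¹ f(t) dt = Σ_{i=0}^{k-1} Σ_{j=0}^{k-i-1} ((k-1)!/(i! j! (k-i-j-1)!)) · (-1/2)^i · ((k-j-1)!(i+j)!/(k+i)!) · P(X, B^i, A^j, C^{k-i-j-1}), where B^i denotes i arguments equal to B, etc. -/

import Mathlib

open intervalIntegral in
lemma beta_nat (b a : ℕ) :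
    ∫ t in (0:ℝ)..1, t ^ a * (1 - t) ^ b
      = (Nat.factorial a * Nat.factorial b : ℝ) / Nat.factorial (a + b + 1) := by
  induction b generalizing a with
  | zero =>
    have h : (Nat.factorial a : ℝ) ≠ 0 := by positivity
    have h2 : ((a:ℝ) + 1) ≠ 0 := by positivity
    simp only [pow_zero, mul_one, integral_pow, one_pow, Nat.factorial_succ,
      Nat.factorial_zero, Nat.cast_mul, Nat.cast_one, add_zero]
    push_cast
    rw [zero_pow (by omega), eq_div_iff (by positivity)]
    field_simp
    norm_num
  | succ b ih =>
    have hu : ∀ x ∈ Set.uIcc (0:ℝ) 1,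
        HasDerivAt (fun x : ℝ => (1 - x) ^ (b + 1))
          (((b : ℝ) + 1) * (1 - x) ^ b * (-1)) x := by
      intro x _
      have h1 : HasDerivAt (fun x : ℝ => 1 - x) (-1) x :=
        (hasDerivAt_id x).const_sub 1
      have := h1.fun_pow (b + 1)
      simpa using this
    have hv : ∀ x ∈ Set.uIcc (0:ℝ) 1,
        HasDerivAt (fun x : ℝ => x ^ (a + 1) / ((a : ℝ) + 1)) (x ^ a) x := by
      intro x _
      have := (hasDerivAt_pow (a + 1) x).div_const ((a : ℝ) + 1)
      have ha : ((a : ℝ) + 1) ≠ 0 := by positivity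
      simpa [mul_div_assoc, mul_comm, mul_div_cancel_left₀, ha] using this
    have hint1 : IntervalIntegrable (fun x : ℝ => ((b : ℝ) + 1) * (1 - x) ^ b * (-1))
        MeasureTheory.volume 0 1 := (by fun_prop : Continuous fun x : ℝ => ((b : ℝ) + 1) * (1 - x) ^ b * (-1)).intervalIntegrable _ _
    have hint2 : IntervalIntegrable (fun x : ℝ => x ^ a)
        MeasureTheory.volume 0 1 := (by fun_prop : Continuous fun x : ℝ => x ^ a).intervalIntegrable _ _
    have key := intervalIntegral.integral_mul_deriv_eq_deriv_mul hu hv hint1 hint2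
    have e1 : (∫ t in (0:ℝ)..1, t ^ a * (1 - t) ^ (b + 1))
        = ∫ x in (0:ℝ)..1, (1 - x) ^ (b + 1) * x ^ a := by
      congr 1; ext t; ring
    rw [e1, key]
    have e2 : (∫ x in (0:ℝ)..1, ((b : ℝ) + 1) * (1 - x) ^ b * (-1) * (x ^ (a + 1) / ((a : ℝ) + 1)))
        = -(((b : ℝ) + 1) / ((a : ℝ) + 1)) * ∫ x in (0:ℝ)..1, x ^ (a + 1) * (1 - x) ^ b := by
      rw [← intervalIntegral.integral_const_mul]
      congr 1; ext x
      have ha : ((a : ℝ) + 1) ≠ 0 := by positivity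
      field_simp
    rw [e2, ih (a + 1)]
    have ha : ((a : ℝ) + 1) ≠ 0 := by positivity
    have h3 : (a + 1 + b + 1) = (a + (b + 1) + 1) := by omega
    rw [h3]
    have hfpos : (0:ℝ) < Nat.factorial (a + (b+1) + 1) := by positivity
    simp only [Nat.factorial_succ (a), Nat.factorial_succ b]
    push_cast
    field_simp
    ring

lemma perm_count {V : Type*} [NormedAddCommGroup V] [NormedSpace ℝ V]
    {k : ℕ} {ι : Type*} [Fintype ι] [DecidableEq ι]
    (P : ContinuousMultilinearMap ℝ (fun _ : Fin k => V) ℝ)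
    (hsymm : ∀ (v : Fin k → V) (σ : Equiv.Perm (Fin k)), P (v ∘ σ) = P v)
    (w : ι → V) (χ χ' : Fin k → ι)
    (h : ∀ c, (Finset.univ.filter fun l => χ l = c).card
            = (Finset.univ.filter fun l => χ' l = c).card) :
    P (w ∘ χ) = P (w ∘ χ') := by
  have fiber : ∀ c : ι, Nonempty ({l // χ' l = c} ≃ {l // χ l = c}) := by
    intro c
    apply Fintype.card_eq.mp
    rw [Fintype.card_subtype, Fintype.card_subtype, h c]
  let E : ∀ c, {l // χ' l = c} ≃ {l // χ l = c} := fun c => (fiber c).some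
  let σ : Equiv.Perm (Fin k) :=
    (Equiv.sigmaFiberEquiv χ').symm.trans
      ((Equiv.sigmaCongrRight E).trans (Equiv.sigmaFiberEquiv χ))
  have hσ : ∀ l, χ (σ l) = χ' l := fun l => (E (χ' l) ⟨l, rfl⟩).2
  calc P (w ∘ χ) = P ((w ∘ χ) ∘ σ) := (hsymm _ σ).symm
    _ = P (w ∘ χ') := by
        congr 1
        funext l
        simp only [Function.comp_apply, hσ l]

lemma prod_fiber_pow {α β M : Type*} [Fintype α] [Fintype β] [DecidableEq β] [CommMonoid M]
    (w : β → M) (f : α → β) :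
    ∏ a, w (f a) = ∏ b, w b ^ (Finset.univ.filter fun a => f a = b).card := by
  rw [← Finset.prod_fiberwise' Finset.univ f w]
  exact Finset.prod_congr rfl fun b _ => Finset.prod_const _

lemma card_filter_fin (k : ℕ) (p : ℕ → Prop) [DecidablePred p] :
    (Finset.univ.filter fun l : Fin k => p l.val).card = ((Finset.range k).filter p).card := by
  rw [← Nat.Iio_eq_range, ← Fin.map_valEmbedding_univ, Finset.filter_map, Finset.card_map]
  rfl

def chi0Fn (k i j : ℕ) : Fin k → Fin 4 := fun l =>
  if l.val = 0 then 0 else if l.val ≤ i then 1 else if l.val ≤ i + j then 2 else 3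

def chiFn (k : ℕ) (s u : Finset (Fin k)) : Fin k → Fin 4 := fun l =>
  if l.val = 0 then 0 else if l ∈ s then 1 else if l ∈ u then 2 else 3

lemma chi0_card {k : ℕ} (i j : ℕ) (hk : 1 ≤ k) (hij : i + j ≤ k - 1) (c : Fin 4) :
    (Finset.univ.filter fun l : Fin k => chi0Fn k i j l = c).card
      = ![1, i, j, k - 1 - i - j] c := by
  simp only [chi0Fn]
  fin_cases c
  · show (Finset.univ.filter fun l : Fin k =>
        (if l.val = 0 then (0 : Fin 4) else if l.val ≤ i then 1 else if l.val ≤ i + j then 2 else 3) = 0).card = 1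
    have h1 : (Finset.univ.filter fun l : Fin k =>
        (if l.val = 0 then (0 : Fin 4) else if l.val ≤ i then 1 else if l.val ≤ i + j then 2 else 3) = 0)
        = Finset.univ.filter fun l : Fin k => l.val = 0 := by
      refine Finset.filter_congr fun l _ => ?_
      split_ifs with h1 h2 h3 <;> simp_all
    rw [h1, card_filter_fin k (fun n => n = 0)]
    have h2 : (Finset.range k).filter (fun n => n = 0) = {0} := by
      ext n; simp [show 0 < k from hk]
    simp [h2]
  · show (Finset.univ.filter fun l : Fin k =>
        (if l.val = 0 then (0 : Fin 4) else if l.val ≤ i then 1 else if l.val ≤ i + j then 2 else 3) = 1).card = i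
    have h1 : (Finset.univ.filter fun l : Fin k =>
        (if l.val = 0 then (0 : Fin 4) else if l.val ≤ i then 1 else if l.val ≤ i + j then 2 else 3) = 1)
        = Finset.univ.filter fun l : Fin k => (¬ l.val = 0 ∧ l.val ≤ i) := by
      refine Finset.filter_congr fun l _ => ?_
      split_ifs with h1 h2 h3 <;> simp_all
    rw [h1, card_filter_fin k (fun n => ¬ n = 0 ∧ n ≤ i)]
    have h2 : ((Finset.range k).filter fun n => ¬ n = 0 ∧ n ≤ i) = Finset.Ioc 0 i := by
      ext n; simp [Finset.mem_Ioc]; omega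
    rw [h2, Nat.card_Ioc]
    omega
  · show (Finset.univ.filter fun l : Fin k =>
        (if l.val = 0 then (0 : Fin 4) else if l.val ≤ i then 1 else if l.val ≤ i + j then 2 else 3) = 2).card = j
    have h1 : (Finset.univ.filter fun l : Fin k =>
        (if l.val = 0 then (0 : Fin 4) else if l.val ≤ i then 1 else if l.val ≤ i + j then 2 else 3) = 2)
        = Finset.univ.filter fun l : Fin k => (¬ l.val = 0 ∧ ¬ l.val ≤ i ∧ l.val ≤ i + j) := by
      refine Finset.filter_congr fun l _ => ?_
      split_ifs with h1 h2 h3 <;> simp_all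
    rw [h1, card_filter_fin k (fun n => ¬ n = 0 ∧ ¬ n ≤ i ∧ n ≤ i + j)]
    have h2 : ((Finset.range k).filter fun n => ¬ n = 0 ∧ ¬ n ≤ i ∧ n ≤ i + j) = Finset.Ioc i (i + j) := by
      ext n; simp [Finset.mem_Ioc]; omega
    rw [h2, Nat.card_Ioc]
    omega
  · show (Finset.univ.filter fun l : Fin k =>
        (if l.val = 0 then (0 : Fin 4) else if l.val ≤ i then 1 else if l.val ≤ i + j then 2 else 3) = 3).card
        = k - 1 - i - j
    have h1 : (Finset.univ.filter fun l : Fin k =>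
        (if l.val = 0 then (0 : Fin 4) else if l.val ≤ i then 1 else if l.val ≤ i + j then 2 else 3) = 3)
        = Finset.univ.filter fun l : Fin k => (¬ l.val = 0 ∧ ¬ l.val ≤ i ∧ ¬ l.val ≤ i + j) := by
      refine Finset.filter_congr fun l _ => ?_
      split_ifs with h1 h2 h3 <;> simp_all
    rw [h1, card_filter_fin k (fun n => ¬ n = 0 ∧ ¬ n ≤ i ∧ ¬ n ≤ i + j)]
    have h2 : ((Finset.range k).filter fun n => ¬ n = 0 ∧ ¬ n ≤ i ∧ ¬ n ≤ i + j) = Finset.Ioc (i + j) (k - 1) := by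
      ext n; simp [Finset.mem_Ioc]; omega
    rw [h2, Nat.card_Ioc]
    omega

lemma S_card (k : ℕ) :
    (Finset.univ.filter fun l : Fin k => l.val ≠ 0).card = k - 1 := by
  rw [card_filter_fin k (fun n => ¬ n = 0)]
  have h2 : ((Finset.range k).filter fun n => ¬ n = 0) = Finset.Ioc 0 (k - 1) := by
    ext n; simp [Finset.mem_Ioc]; omega
  rw [h2, Nat.card_Ioc]
  omega

lemma chi_card {k : ℕ} (hk : 1 ≤ k) {s u : Finset (Fin k)}
    (hs : s ⊆ Finset.univ.filter fun l : Fin k => l.val ≠ 0)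
    (hu : u ⊆ (Finset.univ.filter fun l : Fin k => l.val ≠ 0) \ s) (c : Fin 4) :
    (Finset.univ.filter fun l => chiFn k s u l = c).card
      = ![1, s.card, u.card, k - 1 - s.card - u.card] c := by
  have hs' : ∀ l ∈ s, l.val ≠ 0 := fun l h => (Finset.mem_filter.mp (hs h)).2
  have hu' : ∀ l ∈ u, l.val ≠ 0 ∧ l ∉ s := fun l h => by
    have := Finset.mem_sdiff.mp (hu h)
    exact ⟨(Finset.mem_filter.mp this.1).2, this.2⟩
  simp only [chiFn]
  fin_cases c
  · show (Finset.univ.filter fun l : Fin k =>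
        (if l.val = 0 then (0:Fin 4) else if l ∈ s then 1 else if l ∈ u then 2 else 3) = 0).card = 1
    have h1 : (Finset.univ.filter fun l : Fin k =>
        (if l.val = 0 then (0:Fin 4) else if l ∈ s then 1 else if l ∈ u then 2 else 3) = 0)
        = Finset.univ.filter fun l : Fin k => l.val = 0 := by
      refine Finset.filter_congr fun l _ => ?_
      split_ifs with h1 h2 h3 <;> simp_all
    rw [h1, card_filter_fin k (fun n => n = 0)]
    have h2 : (Finset.range k).filter (fun n => n = 0) = {0} := by
      ext n; simp [show 0 < k from hk]
    simp [h2]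
  · show (Finset.univ.filter fun l : Fin k =>
        (if l.val = 0 then (0:Fin 4) else if l ∈ s then 1 else if l ∈ u then 2 else 3) = 1).card = s.card
    have h1 : (Finset.univ.filter fun l : Fin k =>
        (if l.val = 0 then (0:Fin 4) else if l ∈ s then 1 else if l ∈ u then 2 else 3) = 1)
        = s := by
      ext l
      simp only [Finset.mem_filter, Finset.mem_univ, true_and]
      split_ifs with h1 h2 h3
      · simp only [show ¬ ((0:Fin 4) = 1) by decide, false_iff]
        intro hls; exact hs' l hls h1
      · simp [h2]
      · simp only [show ¬ ((2:Fin 4) = 1) by decide, false_iff]; exact h2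
      · simp only [show ¬ ((3:Fin 4) = 1) by decide, false_iff]; exact h2
    rw [h1]
  · show (Finset.univ.filter fun l : Fin k =>
        (if l.val = 0 then (0:Fin 4) else if l ∈ s then 1 else if l ∈ u then 2 else 3) = 2).card = u.card
    have h1 : (Finset.univ.filter fun l : Fin k =>
        (if l.val = 0 then (0:Fin 4) else if l ∈ s then 1 else if l ∈ u then 2 else 3) = 2)
        = u := by
      ext l
      simp only [Finset.mem_filter, Finset.mem_univ, true_and]
      split_ifs with h1 h2 h3
      · simp only [show ¬ ((0:Fin 4) = 2) by decide, false_iff]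
        intro hlu; exact (hu' l hlu).1 h1
      · simp only [show ¬ ((1:Fin 4) = 2) by decide, false_iff]
        intro hlu; exact (hu' l hlu).2 h2
      · simp [h3]
      · simp only [show ¬ ((3:Fin 4) = 2) by decide, false_iff]; exact h3
    rw [h1]
  · show (Finset.univ.filter fun l : Fin k =>
        (if l.val = 0 then (0:Fin 4) else if l ∈ s then 1 else if l ∈ u then 2 else 3) = 3).card
        = k - 1 - s.card - u.card
    have h1 : (Finset.univ.filter fun l : Fin k =>
        (if l.val = 0 then (0:Fin 4) else if l ∈ s then 1 else if l ∈ u then 2 else 3) = 3)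
        = ((Finset.univ.filter fun l : Fin k => l.val ≠ 0) \ s) \ u := by
      ext l
      simp only [Finset.mem_filter, Finset.mem_univ, true_and, Finset.mem_sdiff]
      split_ifs with h1 h2 h3
      · simp only [show ¬ ((0:Fin 4) = 3) by decide, false_iff]
        tauto
      · simp only [show ¬ ((1:Fin 4) = 3) by decide, false_iff]
        tauto
      · simp only [show ¬ ((2:Fin 4) = 3) by decide, false_iff]
        tauto
      · simp only [show (3:Fin 4) = 3 by decide, true_iff]
        exact ⟨⟨h1, h2⟩, h3⟩
    rw [h1, Finset.card_sdiff_of_subset hu, Finset.card_sdiff_of_subset hs, S_card]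
theorem johnson_expansion {V : Type*} [NormedAddCommGroup V] [NormedSpace ℝ V]
    (k : ℕ) (hk : 1 ≤ k)
    (P : ContinuousMultilinearMap ℝ (fun _ : Fin k => V) ℝ)
    (hsymm : ∀ (v : Fin k → V) (σ : Equiv.Perm (Fin k)), P (v ∘ σ) = P v)
    (X A B C : V) :
    (∫ t in (0:ℝ)..1,
        P (fun l => if l.val = 0 then X
          else (1 - t) • A - ((1/2) * t * (1 - t)) • B + t • C)) =
      ∑ i ∈ Finset.range k, ∑ j ∈ Finset.range (k - i),
        ((Nat.factorial (k - 1) : ℝ) /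
            (Nat.factorial i * Nat.factorial j * Nat.factorial (k - i - j - 1))) *
          (-(1/2)) ^ i *
          ((Nat.factorial (k - j - 1) * Nat.factorial (i + j) : ℝ) / Nat.factorial (k + i)) *
          P (fun l => if l.val = 0 then X
            else if l.val ≤ i then B else if l.val ≤ i + j then A else C) := by
  classical
  set S : Finset (Fin k) := Finset.univ.filter fun l : Fin k => l.val ≠ 0 with hSdef
  have expand : ∀ t : ℝ,
      (P fun l => if l.val = 0 then X
          else (1 - t) • A - ((1/2) * t * (1 - t) : ℝ) • B + t • C)
      = ∑ s ∈ S.powerset, ∑ u ∈ (S \ s).powerset,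
          ((∏ l, (![1, -((1/2)*t*(1-t)), 1-t, t] : Fin 4 → ℝ) (chiFn k s u l))
            * P ((![X, B, A, C] : Fin 4 → V) ∘ chiFn k s u)) := by
    intro t
    have step1 : (fun l : Fin k => if l.val = 0 then X
          else (1 - t) • A - ((1/2) * t * (1 - t) : ℝ) • B + t • C)
        = S.piecewise ((fun _ => (-((1/2) * t * (1 - t) : ℝ)) • B)
              + S.piecewise (fun _ => (1 - t) • A + t • C) (fun _ => X))
            (S.piecewise (fun _ => (1 - t) • A + t • C) (fun _ => X)) := by
      funext l
      by_cases h0 : l.val = 0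
      · have : l ∉ S := by simp [hSdef, h0]
        simp [Finset.piecewise, this, h0]
      · have : l ∈ S := by simp [hSdef, h0]
        simp only [Finset.piecewise, this, if_pos, if_true, Pi.add_apply, if_neg h0]
        module
    rw [step1, P.map_piecewise_add]
    refine Finset.sum_congr rfl fun s hs => ?_
    have hsS : s ⊆ S := Finset.mem_powerset.mp hs
    have step2 : s.piecewise (fun _ => (-((1/2) * t * (1 - t) : ℝ)) • B)
          (S.piecewise (fun _ => (1 - t) • A + t • C) (fun _ => X))
        = (S \ s).piecewise ((fun _ => (1 - t) • A)
              + ((S \ s).piecewise (fun _ => t • C)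
                  (s.piecewise (fun _ => (-((1/2) * t * (1 - t) : ℝ)) • B) (fun _ => X))))
            ((S \ s).piecewise (fun _ => t • C)
              (s.piecewise (fun _ => (-((1/2) * t * (1 - t) : ℝ)) • B) (fun _ => X))) := by
      funext l
      by_cases hls : l ∈ s
      · have h1 : l ∈ S := hsS hls
        have h2 : l ∉ S \ s := by simp [Finset.mem_sdiff, hls]
        simp [Finset.piecewise, hls, h1, h2]
      · by_cases hlS : l ∈ S
        · have h2 : l ∈ S \ s := Finset.mem_sdiff.mpr ⟨hlS, hls⟩
          simp [Finset.piecewise, hls, hlS, h2]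
        · have h2 : l ∉ S \ s := by simp [Finset.mem_sdiff, hlS]
          simp [Finset.piecewise, hls, hlS, h2]
    rw [step2, P.map_piecewise_add]
    refine Finset.sum_congr rfl fun u hu => ?_
    have huT : u ⊆ S \ s := Finset.mem_powerset.mp hu
    have step3 : u.piecewise (fun _ => (1 - t) • A)
          ((S \ s).piecewise (fun _ => t • C)
            (s.piecewise (fun _ => (-((1/2) * t * (1 - t) : ℝ)) • B) (fun _ => X)))
        = fun l => (![1, -((1/2)*t*(1-t)), 1-t, t] : Fin 4 → ℝ) (chiFn k s u l)
            • (![X, B, A, C] : Fin 4 → V) (chiFn k s u l) := by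
      funext l
      by_cases h0 : l.val = 0
      · have h1 : l ∉ S := by simp [hSdef, h0]
        have h2 : l ∉ s := fun h => h1 (hsS h)
        have h3 : l ∉ u := fun h => h1 (Finset.mem_sdiff.mp (huT h)).1
        have h4 : l ∉ S \ s := fun h => h1 (Finset.mem_sdiff.mp h).1
        simp [Finset.piecewise, chiFn, h0, h2, h3, h4]
      · by_cases hls : l ∈ s
        · have h2 : l ∉ S \ s := by simp [Finset.mem_sdiff, hls]
          have h3 : l ∉ u := fun h => h2 (huT h)
          simp [Finset.piecewise, chiFn, h0, hls, h2, h3]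
        · by_cases hlu : l ∈ u
          · simp [Finset.piecewise, chiFn, h0, hls, hlu]
          · have h2 : l ∈ S := by simp [hSdef, h0]
            have h3 : l ∈ S \ s := Finset.mem_sdiff.mpr ⟨h2, hls⟩
            simp [Finset.piecewise, chiFn, h0, hls, hlu, h3]
    rw [step3, P.map_smul_univ]
    rfl
  have hScard : S.card = k - 1 := by rw [hSdef]; exact S_card k
  have cont : ∀ s u : Finset (Fin k), Continuous (fun t : ℝ =>
      (∏ l, (![1, -((1/2)*t*(1-t)), 1-t, t] : Fin 4 → ℝ) (chiFn k s u l))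
        * P ((![X, B, A, C] : Fin 4 → V) ∘ chiFn k s u)) := by
    intro s u
    refine Continuous.mul ?_ continuous_const
    refine continuous_finset_prod _ fun l _ => ?_
    generalize chiFn k s u l = c
    fin_cases c <;> simp <;> fun_prop
  simp only [expand]
  rw [intervalIntegral.integral_finset_sum (fun s _ =>
    ((continuous_finset_sum _ (fun u _ => cont s u)).intervalIntegrable _ _))]
  have swap2 : ∀ s ∈ S.powerset,
      (∫ t in (0:ℝ)..1, ∑ u ∈ (S \ s).powerset,
          ((∏ l, (![1, -((1/2)*t*(1-t)), 1-t, t] : Fin 4 → ℝ) (chiFn k s u l))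
            * P ((![X, B, A, C] : Fin 4 → V) ∘ chiFn k s u)))
      = ∑ u ∈ (S \ s).powerset, ∫ t in (0:ℝ)..1,
          ((∏ l, (![1, -((1/2)*t*(1-t)), 1-t, t] : Fin 4 → ℝ) (chiFn k s u l))
            * P ((![X, B, A, C] : Fin 4 → V) ∘ chiFn k s u)) := by
    intro s _
    exact intervalIntegral.integral_finset_sum (fun u _ =>
      (cont s u).intervalIntegrable _ _)
  rw [Finset.sum_congr rfl swap2]
  have hval : ∀ s ∈ S.powerset, ∀ u ∈ (S \ s).powerset,
      (∫ t in (0:ℝ)..1,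
          ((∏ l, (![1, -((1/2)*t*(1-t)), 1-t, t] : Fin 4 → ℝ) (chiFn k s u l))
            * P ((![X, B, A, C] : Fin 4 → V) ∘ chiFn k s u)))
      = (-(1/2:ℝ))^s.card
          * ((Nat.factorial (k-1-u.card) * Nat.factorial (s.card+u.card) : ℝ)
              / Nat.factorial (k + s.card))
          * P ((![X, B, A, C] : Fin 4 → V) ∘ chi0Fn k s.card u.card) := by
    intro s hs u hu
    have hsS : s ⊆ S := Finset.mem_powerset.mp hs
    have huT : u ⊆ S \ s := Finset.mem_powerset.mp hu
    have hcards : s.card + u.card ≤ k - 1 := by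
      have h1 : u.card ≤ (S \ s).card := Finset.card_le_card huT
      have h2 : (S \ s).card = S.card - s.card := Finset.card_sdiff_of_subset hsS
      have h3 : s.card ≤ S.card := Finset.card_le_card hsS
      omega
    have hsS' : s ⊆ Finset.univ.filter fun l : Fin k => l.val ≠ 0 := by rw [← hSdef]; exact hsS
    have huT' : u ⊆ (Finset.univ.filter fun l : Fin k => l.val ≠ 0) \ s := by
      rw [← hSdef]; exact huT
    have hprod : ∀ t : ℝ,
        (∏ l, (![1, -((1/2)*t*(1-t)), 1-t, t] : Fin 4 → ℝ) (chiFn k s u l))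
        = (-(1/2:ℝ))^s.card * (t^(k-1-u.card) * (1-t)^(s.card+u.card)) := by
      intro t
      rw [prod_fiber_pow (![1, -((1/2)*t*(1-t)), 1-t, t] : Fin 4 → ℝ) (chiFn k s u)]
      have hcc : ∀ c : Fin 4, (Finset.univ.filter fun l => chiFn k s u l = c).card
          = ![1, s.card, u.card, k - 1 - s.card - u.card] c := chi_card hk hsS' huT'
      simp only [hcc]
      rw [Fin.prod_univ_four]
      simp only [Matrix.cons_val_zero, Matrix.cons_val_one, Matrix.head_cons,
        Matrix.cons_val_two, Matrix.tail_cons, Matrix.cons_val_three, Matrix.head_fin_const]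
      rw [show k-1-u.card = s.card + (k-1-s.card-u.card) from by omega,
        show (-(1/2 * t * (1-t)) : ℝ)^s.card
          = (-(1/2:ℝ))^s.card * t^s.card * (1-t)^s.card from by
            rw [show (-(1/2 * t * (1-t)) : ℝ) = (-(1/2:ℝ)) * t * (1-t) from by ring,
              mul_pow, mul_pow]]
      ring
    simp only [hprod]
    rw [intervalIntegral.integral_mul_const, intervalIntegral.integral_const_mul,
      beta_nat (s.card + u.card) (k - 1 - u.card)]
    have hP : P ((![X, B, A, C] : Fin 4 → V) ∘ chiFn k s u)
        = P ((![X, B, A, C] : Fin 4 → V) ∘ chi0Fn k s.card u.card) := by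
      refine perm_count P hsymm _ _ _ fun c => ?_
      rw [chi_card hk hsS' huT' c, chi0_card s.card u.card hk hcards c]
    rw [hP, show (k - 1 - u.card) + (s.card + u.card) + 1 = k + s.card from by omega]
    try push_cast
    try ring
  rw [Finset.sum_congr rfl (fun s hs => Finset.sum_congr rfl (fun u hu => hval s hs u hu))]
  rw [Finset.sum_powerset]
  rw [show S.card + 1 = k from by omega]
  refine Finset.sum_congr rfl fun i hi => ?_
  have hik : i < k := Finset.mem_range.mp hi
  have hinner : ∀ s ∈ Finset.powersetCard i S,
      (∑ u ∈ (S \ s).powerset,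
        (-(1/2:ℝ))^s.card
          * ((Nat.factorial (k-1-u.card) * Nat.factorial (s.card+u.card) : ℝ)
              / Nat.factorial (k + s.card))
          * P ((![X, B, A, C] : Fin 4 → V) ∘ chi0Fn k s.card u.card))
      = ∑ j ∈ Finset.range (k - i), ((k-1-i).choose j : ℝ) *
          ((-(1/2:ℝ))^i
            * ((Nat.factorial (k-1-j) * Nat.factorial (i+j) : ℝ) / Nat.factorial (k + i))
            * P ((![X, B, A, C] : Fin 4 → V) ∘ chi0Fn k i j)) := by
    intro s hs
    obtain ⟨hsS, hscard⟩ := Finset.mem_powersetCard.mp hs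
    have hTcard : (S \ s).card = k - 1 - i := by
      rw [Finset.card_sdiff_of_subset hsS, hScard, hscard]
    rw [Finset.sum_powerset, hTcard, show k - 1 - i + 1 = k - i from by omega]
    refine Finset.sum_congr rfl fun j hj => ?_
    calc (∑ u ∈ Finset.powersetCard j (S \ s),
            (-(1/2:ℝ))^s.card
              * ((Nat.factorial (k-1-u.card) * Nat.factorial (s.card+u.card) : ℝ)
                  / Nat.factorial (k + s.card))
              * P ((![X, B, A, C] : Fin 4 → V) ∘ chi0Fn k s.card u.card))
        = ∑ u ∈ Finset.powersetCard j (S \ s),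
            (-(1/2:ℝ))^i
              * ((Nat.factorial (k-1-j) * Nat.factorial (i+j) : ℝ) / Nat.factorial (k + i))
              * P ((![X, B, A, C] : Fin 4 → V) ∘ chi0Fn k i j) := by
          refine Finset.sum_congr rfl fun u hu => ?_
          rw [(Finset.mem_powersetCard.mp hu).2, hscard]
      _ = ((k-1-i).choose j : ℝ) *
            ((-(1/2:ℝ))^i
              * ((Nat.factorial (k-1-j) * Nat.factorial (i+j) : ℝ) / Nat.factorial (k + i))
              * P ((![X, B, A, C] : Fin 4 → V) ∘ chi0Fn k i j)) := by
          rw [Finset.sum_const, Finset.card_powersetCard, hTcard, nsmul_eq_mul]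
  rw [Finset.sum_congr rfl hinner, Finset.sum_const, Finset.card_powersetCard, hScard,
    nsmul_eq_mul, Finset.mul_sum]
  refine Finset.sum_congr rfl fun j hj => ?_
  have hjk : j < k - i := Finset.mem_range.mp hj
  have hPvec : ((![X, B, A, C] : Fin 4 → V) ∘ chi0Fn k i j)
      = fun l : Fin k => if l.val = 0 then X
          else if l.val ≤ i then B else if l.val ≤ i + j then A else C := by
    funext l
    simp only [Function.comp_apply, chi0Fn]
    split_ifs <;> rfl
  rw [hPvec]
  have e1 := Nat.choose_mul_factorial_mul_factorial (show i ≤ k-1 from by omega)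
  have e2 := Nat.choose_mul_factorial_mul_factorial (show j ≤ k-1-i from by omega)
  have hnat : (k-1).choose i * ((k-1-i).choose j)
      * (Nat.factorial i * Nat.factorial j * Nat.factorial (k-1-i-j))
      = Nat.factorial (k-1) := by
    calc (k-1).choose i * ((k-1-i).choose j)
          * (Nat.factorial i * Nat.factorial j * Nat.factorial (k-1-i-j))
        = ((k-1).choose i * Nat.factorial i)
            * ((k-1-i).choose j * Nat.factorial j * Nat.factorial (k-1-i-j)) := by ring
      _ = ((k-1).choose i * Nat.factorial i) * Nat.factorial (k-1-i) := by rw [e2]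
      _ = Nat.factorial (k-1) := by rw [← e1]
  have hreal : ((Nat.factorial (k-1) : ℝ)
        / (Nat.factorial i * Nat.factorial j * Nat.factorial (k-1-i-j)))
      = ((k-1).choose i : ℝ) * ((k-1-i).choose j) := by
    rw [eq_comm, eq_div_iff (by positivity)]
    exact_mod_cast hnat
  rw [show k - i - j - 1 = k - 1 - i - j from by omega,
    show k - j - 1 = k - 1 - j from by omega, hreal]
  try ring
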